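/- Let μ, ν, z be real numbers with μ > 0 and ν > μ. Then ∫₀¹ x^{ν−μ−1} (1−x)^{μ−1} e^{−z x³} dx = (Γ(μ) Γ(ν−μ) / Γ(ν)) · ₃F₃((ν−μ)/3, (ν−μ+1)/3, (ν−μ+2)/3; ν/3, (ν+1)/3, (ν+2)/3; −z). -/

import Mathlib

open MeasureTheory Set
open scoped ENNReal NNReal

/-- Pochhammer symbol `(c)_n = c(c+1)⋯(c+n−1)` for a real `c`. -/
noncomputable def poch (c : ℝ) (n : ℕ) : ℝ := ∏ i ∈ Finset.range n, (c + i)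

/-- The generalized hypergeometric series `₃F₃(a₁,a₂,a₃;b₁,b₂,b₃;z)`. -/
noncomputable def hyp3F3 (a₁ a₂ a₃ b₁ b₂ b₃ z : ℝ) : ℝ :=
  ∑' n : ℕ, poch a₁ n * poch a₂ n * poch a₃ n / (poch b₁ n * poch b₂ n * poch b₃ n) *
    z ^ n / n.factorial

lemma poch_pos {c : ℝ} (hc : 0 < c) (n : ℕ) : 0 < poch c n :=
  Finset.prod_pos fun i _ => by positivity

lemma poch_succ (c : ℝ) (n : ℕ) : poch c (n + 1) = poch c n * (c + n) :=
  Finset.prod_range_succ _ _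

lemma Gamma_add_nat {c : ℝ} (hc : 0 < c) (n : ℕ) :
    Real.Gamma (c + n) = poch c n * Real.Gamma c := by
  induction n with
  | zero => simp [poch]
  | succ n ih =>
      have h1 : c + (n + 1 : ℕ) = (c + n) + 1 := by push_cast; ring
      rw [h1, Real.Gamma_add_one (by positivity), ih, poch_succ]
      ring

lemma poch_three_mul (c : ℝ) (n : ℕ) :
    poch c (3 * n) = 27 ^ n * (poch (c / 3) n * poch ((c + 1) / 3) n * poch ((c + 2) / 3) n) := by
  induction n with
  | zero => simp [poch]
  | succ n ih =>
      have h3 : 3 * (n + 1) = (3 * n + 1) + 1 + 1 := by ring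
      rw [h3, poch_succ, poch_succ, poch_succ, ih, poch_succ, poch_succ, poch_succ]
      push_cast
      ring

lemma beta_integrable {a b : ℝ} (ha : 0 < a) (hb : 0 < b) :
    IntegrableOn (fun x : ℝ => x ^ (a - 1) * (1 - x) ^ (b - 1)) (Ioo 0 1) := by
  have h := Complex.betaIntegral_convergent (u := a) (v := b) (by simpa) (by simpa)
  have h2 : IntegrableOn (fun x : ℝ => (x : ℂ) ^ (a - 1 : ℂ) * (1 - (x : ℂ)) ^ (b - 1 : ℂ))
      (Ioo 0 1) := ((intervalIntegrable_iff_integrableOn_Ioc_of_le zero_le_one).mp h).mono_set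
      Ioo_subset_Ioc_self
  have h3 := h2.norm
  refine h3.congr ((ae_restrict_iff' measurableSet_Ioo).mpr (ae_of_all _ fun x hx => ?_))
  have hx0 : 0 < x := hx.1
  have hx1 : 0 < 1 - x := by linarith [hx.2]
  simp only [norm_mul]
  rw [show ((1:ℂ) - (x:ℂ)) = ((1 - x : ℝ) : ℂ) by push_cast; ring]
  rw [Complex.norm_cpow_eq_rpow_re_of_pos hx0, Complex.norm_cpow_eq_rpow_re_of_pos hx1]
  norm_num

lemma beta_eval {a b : ℝ} (ha : 0 < a) (hb : 0 < b) :
    ∫ x in Ioo (0:ℝ) 1, x ^ (a - 1) * (1 - x) ^ (b - 1)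
      = Real.Gamma a * Real.Gamma b / Real.Gamma (a + b) := by
  have key := Complex.Gamma_mul_Gamma_eq_betaIntegral (s := a) (t := b) (by simpa) (by simpa)
  have hbeta : Complex.betaIntegral a b
      = ((∫ x in Ioo (0:ℝ) 1, x ^ (a - 1) * (1 - x) ^ (b - 1) : ℝ) : ℂ) := by
    rw [Complex.betaIntegral, intervalIntegral.integral_of_le zero_le_one,
      MeasureTheory.integral_Ioc_eq_integral_Ioo,
      show ((∫ x in Ioo (0:ℝ) 1, x ^ (a - 1) * (1 - x) ^ (b - 1) : ℝ) : ℂ)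
        = ∫ x in Ioo (0:ℝ) 1, ((x ^ (a - 1) * (1 - x) ^ (b - 1) : ℝ) : ℂ) from integral_ofReal.symm]
    refine setIntegral_congr_fun measurableSet_Ioo (fun x hx => ?_)
    have hx0 : (0:ℝ) ≤ x := le_of_lt hx.1
    have hx1 : (0:ℝ) ≤ 1 - x := by linarith [hx.2]
    rw [Complex.ofReal_mul, Complex.ofReal_cpow hx0, Complex.ofReal_cpow hx1]
    push_cast
    ring
  rw [hbeta, ← Complex.ofReal_add, Complex.Gamma_ofReal, Complex.Gamma_ofReal,
    Complex.Gamma_ofReal, ← Complex.ofReal_mul, ← Complex.ofReal_mul] at key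
  have := Complex.ofReal_injective key
  have hG : 0 < Real.Gamma (a + b) := Real.Gamma_pos_of_pos (by linarith)
  field_simp
  linarith [this]


/-- For `μ > 0` and `ν > μ`:
`∫₀¹ x^{ν−μ−1}(1−x)^{μ−1} e^{−zx³} dx
  = (Γ(μ)Γ(ν−μ)/Γ(ν)) ₃F₃((ν−μ)/3,(ν−μ+1)/3,(ν−μ+2)/3;ν/3,(ν+1)/3,(ν+2)/3;−z)`. -/
theorem integral_beta_exp_cube (μ ν z : ℝ) (hμ : 0 < μ) (hν : μ < ν) :
    ∫ x in Ioo (0:ℝ) 1, x ^ (ν - μ - 1) * (1 - x) ^ (μ - 1) * Real.exp (-(z * x ^ 3))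
      = Real.Gamma μ * Real.Gamma (ν - μ) / Real.Gamma ν *
          hyp3F3 ((ν - μ) / 3) ((ν - μ + 1) / 3) ((ν - μ + 2) / 3)
            (ν / 3) ((ν + 1) / 3) ((ν + 2) / 3) (-z) := by
  set a : ℝ := ν - μ with ha_def
  have ha : 0 < a := by simp [ha_def]; linarith
  have hν0 : 0 < ν := by linarith
  -- the summand functions
  set f : ℕ → ℝ → ℝ := fun n x =>
    (-z) ^ n / n.factorial * (x ^ (a + 3 * (n:ℝ) - 1) * (1 - x) ^ (μ - 1)) with hf_def
  -- Step A: pointwise series expansion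
  have hA : ∀ x ∈ Ioo (0:ℝ) 1,
      x ^ (ν - μ - 1) * (1 - x) ^ (μ - 1) * Real.exp (-(z * x ^ 3)) = ∑' n, f n x := by
    intro x hx
    have hx0 : 0 < x := hx.1
    have hexp : Real.exp (-(z * x ^ 3)) = ∑' n : ℕ, (-(z * x ^ 3)) ^ n / n.factorial := by
      rw [Real.exp_eq_exp_ℝ, NormedSpace.exp_eq_tsum_div]
    rw [hexp, ← tsum_mul_left]
    refine tsum_congr fun n => ?_
    have hxp : x ^ (a + 3 * (n:ℝ) - 1) = x ^ (ν - μ - 1) * (x ^ 3) ^ n := by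
      rw [show a + 3 * (n:ℝ) - 1 = (ν - μ - 1) + (3 * n : ℕ) by push_cast [ha_def]; ring,
        Real.rpow_add hx0, Real.rpow_natCast]
      push_cast; ring
    rw [hf_def]
    simp only [hxp]
    rw [show (-(z * x ^ 3)) ^ n = (-z)^n * (x^3)^n by rw [← mul_pow]; ring_nf]
    ring
  rw [setIntegral_congr_fun measurableSet_Ioo hA]
  -- Step B: swap integral and sum
  have hmeas : ∀ n : ℕ, AEStronglyMeasurable (f n) (volume.restrict (Ioo 0 1)) := by
    intro n
    apply Measurable.aestronglyMeasurable
    fun_prop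
  have hswap : ∫ x in Ioo (0:ℝ) 1, ∑' n, f n x = ∑' n, ∫ x in Ioo (0:ℝ) 1, f n x := by
    refine integral_tsum hmeas ?_
    suffices h : (∑' n : ℕ, ∫⁻ x in Ioo (0:ℝ) 1, ‖f n x‖₊) < ⊤ from h.ne
    -- bound each term
    set g : ℝ → ℝ := fun x => x ^ (a - 1) * (1 - x) ^ (μ - 1) with hg_def
    have hgint : IntegrableOn g (Ioo 0 1) := beta_integrable ha hμ
    have hgnn : 0 ≤ᵐ[volume.restrict (Ioo (0:ℝ) 1)] g := by
      refine (ae_restrict_iff' measurableSet_Ioo).mpr (ae_of_all _ fun x hx => ?_)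
      have hx0 : 0 < x := hx.1
      have hx1 : 0 < 1 - x := by linarith [hx.2]
      positivity
    have hglint : ∫⁻ x in Ioo (0:ℝ) 1, ENNReal.ofReal (g x)
        = ENNReal.ofReal (∫ x in Ioo (0:ℝ) 1, g x) :=
      (ofReal_integral_eq_lintegral_ofReal hgint hgnn).symm
    have hbound : ∀ n : ℕ, ∫⁻ x in Ioo (0:ℝ) 1, ‖f n x‖₊
        ≤ ENNReal.ofReal (|z| ^ n / n.factorial) * ENNReal.ofReal (∫ x in Ioo (0:ℝ) 1, g x) := by
      intro n
      rw [← hglint, ← lintegral_const_mul _ (by fun_prop)]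
      refine setLIntegral_mono' measurableSet_Ioo fun x hx => ?_
      have hx0 : 0 < x := hx.1
      have hx1 : 0 < 1 - x := by linarith [hx.2]
      rw [← ENNReal.ofReal_mul (by positivity)]
      rw [show (‖f n x‖₊ : ℝ≥0∞) = ENNReal.ofReal ‖f n x‖ from (ofReal_norm _).symm]
      refine ENNReal.ofReal_le_ofReal ?_
      have hxp : x ^ (a + 3 * (n:ℝ) - 1) ≤ x ^ (a - 1) := by
        rw [show a + 3 * (n:ℝ) - 1 = (a - 1) + (3 * n : ℕ) by push_cast; ring,
          Real.rpow_add hx0, Real.rpow_natCast]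
        nlinarith [pow_le_one₀ (le_of_lt hx0) (by linarith [hx.2] : x ≤ 1)
            (n := 3 * n), Real.rpow_pos_of_pos hx0 (a - 1),
          pow_pos hx0 (3 * n)]
      calc ‖f n x‖ = |(-z)^n / n.factorial| * (x ^ (a + 3*(n:ℝ) - 1) * (1-x)^(μ-1)) := by
            rw [hf_def]; simp only [norm_mul, Real.norm_eq_abs]
            rw [abs_of_nonneg (by positivity : (0:ℝ) ≤ x ^ (a + 3*(n:ℝ) - 1)),
              abs_of_nonneg (by positivity : (0:ℝ) ≤ (1-x) ^ (μ-1))]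
        _ ≤ |z|^n / n.factorial * (x ^ (a-1) * (1-x)^(μ-1)) := by
            rw [abs_div, abs_pow, abs_neg, abs_of_nonneg (by positivity : (0:ℝ) ≤ (n.factorial:ℝ))]
            gcongr
        _ = |z|^n / n.factorial * g x := rfl
    calc (∑' n : ℕ, ∫⁻ x in Ioo (0:ℝ) 1, ‖f n x‖₊)
        ≤ ∑' n : ℕ, ENNReal.ofReal (|z| ^ n / n.factorial)
            * ENNReal.ofReal (∫ x in Ioo (0:ℝ) 1, g x) := ENNReal.tsum_le_tsum hbound
      _ = (∑' n : ℕ, ENNReal.ofReal (|z| ^ n / n.factorial))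
            * ENNReal.ofReal (∫ x in Ioo (0:ℝ) 1, g x) := ENNReal.tsum_mul_right
      _ < ⊤ := by
          refine ENNReal.mul_lt_top ?_ ENNReal.ofReal_lt_top
          rw [← ENNReal.ofReal_tsum_of_nonneg (fun n => by positivity)
            (Real.summable_pow_div_factorial |z|)]
          exact ENNReal.ofReal_lt_top
  rw [hswap]
  -- Step C: evaluate each integral
  have hC : ∀ n : ℕ, ∫ x in Ioo (0:ℝ) 1, f n x
      = (-z) ^ n / n.factorial *
          (Real.Gamma (a + (3*n : ℕ)) * Real.Gamma μ / Real.Gamma (ν + (3*n : ℕ))) := by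
    intro n
    rw [hf_def]
    simp only []
    rw [MeasureTheory.integral_const_mul]
    congr 1
    have h3n : ((3*n : ℕ) : ℝ) = 3 * (n:ℝ) := by push_cast; ring
    have := beta_eval (a := a + (3*n:ℕ)) (b := μ) (by positivity) hμ
    rw [show a + (3*n:ℕ) + μ = ν + (3*n:ℕ) by rw [ha_def]; ring] at this
    rw [← this]
    refine setIntegral_congr_fun measurableSet_Ioo fun x hx => ?_
    rw [h3n]
  rw [tsum_congr hC]
  -- Step D: algebraic identification with the hypergeometric series
  rw [hyp3F3, ← tsum_mul_left]
  refine tsum_congr fun n => ?_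
  have hGa : Real.Gamma (a + (3*n:ℕ)) = poch a (3*n) * Real.Gamma a := Gamma_add_nat ha _
  have hGν : Real.Gamma (ν + (3*n:ℕ)) = poch ν (3*n) * Real.Gamma ν := Gamma_add_nat hν0 _
  rw [hGa, hGν, poch_three_mul a n, poch_three_mul ν n]
  have hpν1 : 0 < poch (ν/3) n := poch_pos (by positivity) n
  have hpν2 : 0 < poch ((ν+1)/3) n := poch_pos (by positivity) n
  have hpν3 : 0 < poch ((ν+2)/3) n := poch_pos (by positivity) n
  have hGν' : 0 < Real.Gamma ν := Real.Gamma_pos_of_pos hν0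
  have hfact : (0:ℝ) < n.factorial := by positivity
  have h27 : (0:ℝ) < (27:ℝ)^n := by positivity
  rw [ha_def]
  field_simp
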